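/- Let f be a bounded measurable function on ℝ^d with compact support, b > 0, and suppose α := ∫_{supp f} max{1, f(s)²/b} ds < 1/2. Then for every ε ∈ (0, 1/2 − α), ∫_ℝ (1+x²)^{−1+ε} exp( ∫_{supp f} log(1 + x² f(s)²/b) ds ) dx < ∞. -/

import Mathlib

open MeasureTheory

open Real Set in
/-- Integrability of `(1+x²)^p` on `ℝ` for `p < -1/2`. -/
lemma integrable_one_add_sq_rpow_aux {p : ℝ} (hp : p < -(1/2)) :
    Integrable fun x : ℝ => (1 + x ^ 2) ^ p := by
  have hc : Continuous fun x : ℝ => (1 + x ^ 2) ^ p :=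
    (continuous_const.add (continuous_pow 2)).rpow_const fun x => Or.inl (by positivity : (1:ℝ) + x ^ 2 ≠ 0)
  have hIoi : IntegrableOn (fun x : ℝ => (1 + x ^ 2) ^ p) (Ioi 1) := by
    have h2p : 2 * p < -1 := by linarith
    apply Integrable.mono' (integrableOn_Ioi_rpow_of_lt h2p zero_lt_one)
    · exact hc.aestronglyMeasurable.restrict
    · filter_upwards [ae_restrict_mem measurableSet_Ioi] with x hx
      have hx0 : (0 : ℝ) < x := lt_trans zero_lt_one hx
      rw [Real.norm_eq_abs, abs_of_nonneg (rpow_nonneg (by positivity) _)]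
      calc (1 + x ^ 2) ^ p ≤ (x ^ 2) ^ p :=
            rpow_le_rpow_of_nonpos (by positivity) (by linarith) (by linarith)
        _ = x ^ (2 * p) := by
            rw [Real.rpow_mul hx0.le, Real.rpow_two]
  have hIcc : IntegrableOn (fun x : ℝ => (1 + x ^ 2) ^ p) (Icc (-1 : ℝ) 1) :=
    hc.integrableOn_Icc
  have hIio : IntegrableOn (fun x : ℝ => (1 + x ^ 2) ^ p) (Iio (-1)) := by
    rw [← (Measure.measurePreserving_neg (volume : Measure ℝ)).integrableOn_comp_preimage
        (Homeomorph.neg ℝ).measurableEmbedding]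
    simpa [Function.comp_def, neg_sq] using hIoi
  have huniv : (Iio (-1 : ℝ)) ∪ (Icc (-1 : ℝ) 1 ∪ Ioi 1) = univ := by
    ext x
    simp only [mem_union, mem_Iio, mem_Icc, mem_Ioi, mem_univ, iff_true]
    by_cases h1 : x < -1
    · exact Or.inl h1
    · by_cases h2 : x ≤ 1
      · exact Or.inr (Or.inl ⟨le_of_not_gt h1, h2⟩)
      · exact Or.inr (Or.inr (lt_of_not_ge h2))
  rw [← integrableOn_univ, ← huniv, integrableOn_union, integrableOn_union]
  exact ⟨hIio, hIcc, hIoi⟩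

open Real Set in
/-- Key pointwise bound: `log (1 + y t) ≤ max 1 t · log (1 + y)` for `y, t ≥ 0`. -/
lemma log_one_add_mul_le_aux {y t : ℝ} (hy : 0 ≤ y) (ht : 0 ≤ t) :
    Real.log (1 + y * t) ≤ max 1 t * Real.log (1 + y) := by
  rcases le_or_gt t 1 with h | h
  · rw [max_eq_left h, one_mul]
    apply Real.log_le_log (by positivity)
    nlinarith
  · rw [max_eq_right h.le]
    have h1 : 1 + y * t ≤ (1 + y) ^ t := by
      have := one_add_mul_self_le_rpow_one_add (by linarith : (-1:ℝ) ≤ y) h.le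
      linarith [this, mul_comm t y]
    calc Real.log (1 + y * t) ≤ Real.log ((1 + y) ^ t) :=
          Real.log_le_log (by positivity) h1
      _ = t * Real.log (1 + y) := Real.log_rpow (by positivity) t

set_option maxHeartbeats 1000000 in
/-- Verification of condition (5) for the Gamma random measure example: if `f` is a
bounded measurable compactly supported function with
`α = ∫_{supp f} max{1, f(s)²/b} ds < 1/2`, then for every `ε ∈ (0, 1/2 − α)` the function
`x ↦ (1+x²)^{−1+ε} exp(∫_{supp f} log(1 + x² f(s)²/b) ds)` is integrable on `ℝ`. -/
theorem gamma_condition_five {d : ℕ} (f : (Fin d → ℝ) → ℝ) (b : ℝ) (hb : 0 < b)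
    (hf : Measurable f) (hbdd : ∃ C : ℝ, ∀ s, |f s| ≤ C) (hcs : HasCompactSupport f)
    (α : ℝ)
    (hα : α = ∫ s in Function.support f, max 1 (f s ^ 2 / b))
    (hαlt : α < 1/2) :
    ∀ ε : ℝ, ε ∈ Set.Ioo (0 : ℝ) (1/2 - α) →
      Integrable (fun x : ℝ => (1 + x ^ 2) ^ (-1 + ε) *
        Real.exp (∫ s in Function.support f, Real.log (1 + x ^ 2 * f s ^ 2 / b))) := by
  intro ε hε
  obtain ⟨C, hC⟩ := hbdd
  set S := Function.support f with hS
  have hSmeas : MeasurableSet S := measurableSet_support hf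
  have hSfin : volume S < ⊤ :=
    lt_of_le_of_lt (measure_mono (subset_tsupport f)) hcs.measure_lt_top
  -- measurability in x of the inner integral
  have hmeas_g : Measurable fun x : ℝ =>
      ∫ s in S, Real.log (1 + x ^ 2 * f s ^ 2 / b) := by
    have hjoint : StronglyMeasurable fun p : ℝ × (Fin d → ℝ) =>
        Real.log (1 + p.1 ^ 2 * f p.2 ^ 2 / b) := by
      apply Measurable.stronglyMeasurable
      exact Real.measurable_log.comp
        (measurable_const.add
          ((((measurable_fst.pow_const 2).mul
            ((hf.comp measurable_snd).pow_const 2)).div_const b)))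
    exact (hjoint.integral_prod_right').measurable
  -- pointwise bound on the exponential of the inner integral
  have hCsq : ∀ s, f s ^ 2 ≤ C ^ 2 := fun s => by
    have := hC s
    nlinarith [abs_nonneg (f s), sq_abs (f s)]
  have hkey : ∀ x : ℝ,
      (∫ s in S, Real.log (1 + x ^ 2 * f s ^ 2 / b)) ≤ α * Real.log (1 + x ^ 2) := by
    intro x
    have hpt : ∀ s, Real.log (1 + x ^ 2 * f s ^ 2 / b)
        ≤ max 1 (f s ^ 2 / b) * Real.log (1 + x ^ 2) := by
      intro s
      have h := log_one_add_mul_le_aux (y := x ^ 2) (t := f s ^ 2 / b)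
        (by positivity) (by positivity)
      calc Real.log (1 + x ^ 2 * f s ^ 2 / b)
          = Real.log (1 + x ^ 2 * (f s ^ 2 / b)) := by rw [mul_div_assoc]
        _ ≤ max 1 (f s ^ 2 / b) * Real.log (1 + x ^ 2) := h
    have hint1 : IntegrableOn (fun s => Real.log (1 + x ^ 2 * f s ^ 2 / b)) S := by
      have hconst : IntegrableOn
          (fun _ : Fin d → ℝ => Real.log (1 + x ^ 2 * C ^ 2 / b)) S :=
        integrableOn_const hSfin.ne
      apply hconst.mono'
      · exact (Real.measurable_log.comp
          (measurable_const.add (((measurable_const.mul (hf.pow_const 2)).div_const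
            b)))).aestronglyMeasurable.restrict
      · refine Filter.Eventually.of_forall fun s => ?_
        have h0 : 0 ≤ Real.log (1 + x ^ 2 * f s ^ 2 / b) :=
          Real.log_nonneg (by
            have : 0 ≤ x ^ 2 * f s ^ 2 / b := by positivity
            linarith)
        rw [Real.norm_eq_abs, abs_of_nonneg h0]
        apply Real.log_le_log (by positivity)
        have h2 : x ^ 2 * f s ^ 2 ≤ x ^ 2 * C ^ 2 :=
          mul_le_mul_of_nonneg_left (hCsq s) (sq_nonneg x)
        have h3 : x ^ 2 * f s ^ 2 / b ≤ x ^ 2 * C ^ 2 / b := by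
          gcongr ?_ / b
        linarith
    have hint2 : IntegrableOn (fun s => max 1 (f s ^ 2 / b)) S := by
      have hconst : IntegrableOn (fun _ : Fin d → ℝ => max 1 (C ^ 2 / b)) S :=
        integrableOn_const hSfin.ne
      apply hconst.mono'
      · exact (measurable_const.max
          ((hf.pow_const 2).div_const b)).aestronglyMeasurable.restrict
      · refine Filter.Eventually.of_forall fun s => ?_
        rw [Real.norm_eq_abs, abs_of_nonneg (le_trans zero_le_one (le_max_left _ _))]
        exact max_le_max le_rfl (by gcongr ?_ / b; exact hCsq s)
    calc (∫ s in S, Real.log (1 + x ^ 2 * f s ^ 2 / b))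
        ≤ ∫ s in S, max 1 (f s ^ 2 / b) * Real.log (1 + x ^ 2) :=
          integral_mono hint1 (hint2.mul_const _) hpt
      _ = α * Real.log (1 + x ^ 2) := by
          rw [integral_mul_const, hα]
  -- the majorant
  have hmaj : Integrable fun x : ℝ => (1 + x ^ 2) ^ (-1 + ε + α) := by
    apply integrable_one_add_sq_rpow_aux
    obtain ⟨hε1, hε2⟩ := hε
    linarith
  apply hmaj.mono' 
  · have hcont : Continuous fun x : ℝ => (1 + x ^ 2) ^ (-1 + ε) :=
      (continuous_const.add (continuous_pow 2)).rpow_const fun x => Or.inl (by positivity : (1:ℝ) + x ^ 2 ≠ 0)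
    exact (hcont.measurable.mul
      (Real.measurable_exp.comp hmeas_g)).aestronglyMeasurable
  · refine Filter.Eventually.of_forall fun x => ?_
    have h1 : (0:ℝ) < 1 + x ^ 2 := by positivity
    rw [Real.norm_eq_abs, abs_of_nonneg
      (mul_nonneg (Real.rpow_nonneg h1.le _) (Real.exp_nonneg _))]
    have h2 : Real.exp (∫ s in S, Real.log (1 + x ^ 2 * f s ^ 2 / b))
        ≤ (1 + x ^ 2) ^ α := by
      rw [Real.rpow_def_of_pos h1, mul_comm]
      exact Real.exp_le_exp.2 (hkey x)
    calc (1 + x ^ 2) ^ (-1 + ε) * Real.exp (∫ s in S, Real.log (1 + x ^ 2 * f s ^ 2 / b))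
        ≤ (1 + x ^ 2) ^ (-1 + ε) * (1 + x ^ 2) ^ α :=
          mul_le_mul_of_nonneg_left h2 (Real.rpow_nonneg h1.le _)
      _ = (1 + x ^ 2) ^ (-1 + ε + α) := (Real.rpow_add h1 _ _).symm
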